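/- Let λ ≠ 0 and let (g_t)_{t∈ℝ} and (R_w)_{w∈ℝ} be jointly measurable flows of Borel bijections of a standard Borel space X satisfying g_t ∘ R_w = R_{e^{λt}w} ∘ g_t for all t, w ∈ ℝ. Let θ be a Borel probability measure on X × X that is invariant under the diagonal flow D_t(x, y) = (g_t x, g_t y), under (x, y) ↦ (R_w x, y), and under (x, y) ↦ (x, R_w y), for all t, w ∈ ℝ. Let μ = (π₁)_*θ be the first marginal of θ, and assume: (i) μ is ergodic for the flow (g_t); (ii) there is a measurable family (θ_x)_{x∈X} of Borel probability measures on X with θ(A × B) = ∫_A θ_x(B) dμ(x) for all measurable A, B ⊆ X, such that for μ-a.e. x the measure θ_x is invariant and ergodic for the flow (R_w). Then θ is ergodic for the diagonal flow (D_t). -/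

import Mathlib

open MeasureTheory Filter Set ProbabilityTheory
open scoped symmDiff ENNReal

/-- Triangle-inequality congruence for measures of symmetric differences. -/
lemma aux_symmDiff_congr {Y : Type*} [MeasurableSpace Y] (θ : Measure Y) {A A' B B' : Set Y}
    (h1 : θ (A ∆ A') = 0) (h2 : θ (B ∆ B') = 0) : θ (A ∆ B) = θ (A' ∆ B') := by
  have key : ∀ C C' D D' : Set Y, θ (C ∆ C') = 0 → θ (D ∆ D') = 0 →
      θ (C ∆ D) ≤ θ (C' ∆ D') := by
    intro C C' D D' hC hD
    have t1 : θ (C ∆ D) ≤ θ (C ∆ C') + θ (C' ∆ D) := measure_symmDiff_le _ _ _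
    have t2 : θ (C' ∆ D) ≤ θ (C' ∆ D') + θ (D' ∆ D) := measure_symmDiff_le _ _ _
    have hD' : θ (D' ∆ D) = 0 := by rwa [symmDiff_comm]
    calc θ (C ∆ D) ≤ θ (C ∆ C') + θ (C' ∆ D) := t1
      _ ≤ θ (C ∆ C') + (θ (C' ∆ D') + θ (D' ∆ D)) := by gcongr
      _ = θ (C' ∆ D') := by rw [hC, hD', zero_add, add_zero]
  have h1' : θ (A' ∆ A) = 0 := by rwa [symmDiff_comm]
  have h2' : θ (B' ∆ B) = 0 := by rwa [symmDiff_comm]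
  exact le_antisymm (key A A' B B' h1 h2) (key A' A B' B h1' h2')

/-- If an uncountable (real-indexed) family of measurable sets has all pairwise
symmetric differences of the same measure `a`, then `a = 0`, by separability of the
measure algebra. -/
lemma aux_pairwise_zero {Y : Type*} [MeasurableSpace Y] [MeasurableSpace.CountablyGenerated Y]
    (θ : Measure Y) [IsProbabilityMeasure θ] (B : ℝ → Set Y) (hB : ∀ w, MeasurableSet (B w))
    (a : ℝ≥0∞) (h : ∀ w w' : ℝ, w ≠ w' → θ (B w ∆ B w') = a) : a = 0 := by
  by_contra ha
  have hfin : a ≠ ∞ := by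
    rw [← h 0 1 (by norm_num)]; exact measure_ne_top θ _
  have htr : 0 < a.toReal := ENNReal.toReal_pos ha hfin
  set ε : ℝ := a.toReal / 3 with hε
  have εpos : 0 < ε := by positivity
  obtain ⟨𝒜, hcnt, hdense⟩ := exists_countable_measureDense (μ := θ)
  have hex : ∀ w : ℝ, ∃ t ∈ 𝒜, θ (B w ∆ t) < ENNReal.ofReal ε := fun w =>
    hdense.approx (B w) (hB w) (measure_ne_top θ _) ε εpos
  choose t ht hlt using hex
  have hninj : ¬ Function.Injective t := by
    intro hinj
    have : (Set.univ : Set ℝ).Countable := by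
      have : (t ⁻¹' 𝒜).Countable := hcnt.preimage hinj
      exact this.mono (fun w _ => ht w)
    exact Cardinal.not_countable_real this
  rw [Function.not_injective_iff] at hninj
  obtain ⟨w, w', hww', hne⟩ := hninj
  have hlt2 : θ (B w' ∆ t w) < ENNReal.ofReal ε := by rw [hww']; exact hlt w'
  have hlt2' : θ (t w ∆ B w') < ENNReal.ofReal ε := by rwa [symmDiff_comm]
  have : a < a := by
    calc a = θ (B w ∆ B w') := (h w w' hne).symm
      _ ≤ θ (B w ∆ t w) + θ (t w ∆ B w') := measure_symmDiff_le _ _ _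
      _ < ENNReal.ofReal ε + ENNReal.ofReal ε := by
          exact ENNReal.add_lt_add (hlt w) hlt2'
      _ = ENNReal.ofReal (ε + ε) := (ENNReal.ofReal_add εpos.le εpos.le).symm
      _ < a := by
          rw [ENNReal.ofReal_lt_iff_lt_toReal (by positivity) hfin]
          rw [hε]; linarith
  exact lt_irrefl _ this

/-- The Mautner-type step: a set invariant (mod θ) under the renormalizing flow `D` is
invariant (mod θ) under the renormalized flow `S`. -/
lemma aux_step1 {Y : Type*} [MeasurableSpace Y] [MeasurableSpace.CountablyGenerated Y]
    (lam : ℝ) (hlam : lam ≠ 0) (θ : Measure Y) [IsProbabilityMeasure θ]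
    (D S : ℝ → Y → Y)
    (hD : ∀ t, MeasurePreserving (D t) θ θ) (hS : ∀ w, MeasurePreserving (S w) θ θ)
    (hS0 : S 0 = id) (hSadd : ∀ w w' : ℝ, S w ∘ S w' = S (w + w'))
    (hcomm : ∀ t w : ℝ, D t ∘ S w = S (Real.exp (lam * t) * w) ∘ D t)
    (A : Set Y) (hA : MeasurableSet A)
    (hAinv : ∀ t : ℝ, θ ((D t ⁻¹' A) ∆ A) = 0) :
    ∀ w : ℝ, θ ((S w ⁻¹' A) ∆ A) = 0 := by
  set f : ℝ → ℝ≥0∞ := fun w => θ ((S w ⁻¹' A) ∆ A) with hf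
  have hscale : ∀ t w : ℝ, f w = f (Real.exp (lam * t) * w) := by
    intro t w
    have hSA : θ ((S w ⁻¹' A) ∆ (S w ⁻¹' (D t ⁻¹' A))) = 0 := by
      rw [← preimage_symmDiff, (hS w).measure_preimage
        ((hA.symmDiff ((hD t).measurable hA)).nullMeasurableSet)]
      rw [symmDiff_comm]; exact hAinv t
    have hAA : θ (A ∆ (D t ⁻¹' A)) = 0 := by rw [symmDiff_comm]; exact hAinv t
    have h1 : f w = θ ((S w ⁻¹' (D t ⁻¹' A)) ∆ (D t ⁻¹' A)) :=
      aux_symmDiff_congr θ hSA hAA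
    have h2 : S w ⁻¹' (D t ⁻¹' A) = D t ⁻¹' (S (Real.exp (lam * t) * w) ⁻¹' A) := by
      rw [← preimage_comp, hcomm t w, preimage_comp]
    rw [h1, h2, ← preimage_symmDiff,
      (hD t).measure_preimage
        (((hS _).measurable hA).symmDiff hA).nullMeasurableSet]
  have hneg : ∀ w : ℝ, f (-w) = f w := by
    intro w
    have hid : S w ⁻¹' (S (-w) ⁻¹' A) = A := by
      rw [← preimage_comp, hSadd, neg_add_cancel, hS0, preimage_id]
    have h3 : f (-w) = θ (S w ⁻¹' ((S (-w) ⁻¹' A) ∆ A)) :=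
      ((hS w).measure_preimage
        (((hS (-w)).measurable hA).symmDiff hA).nullMeasurableSet).symm
    rw [h3, preimage_symmDiff, hid, symmDiff_comm]
  have hone : ∀ w : ℝ, w ≠ 0 → f w = f 1 := by
    have hpos : ∀ w : ℝ, 0 < w → f w = f 1 := by
      intro w hw
      have h4 := hscale (Real.log w / lam) 1
      have he : Real.exp (lam * (Real.log w / lam)) * 1 = w := by
        rw [mul_one]
        have : lam * (Real.log w / lam) = Real.log w := by field_simp
        rw [this, Real.exp_log hw]
      rw [he] at h4
      exact h4.symm
    intro w hw
    rcases lt_or_gt_of_ne hw with h | h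
    · rw [← hneg w]; exact hpos (-w) (by linarith)
    · exact hpos w h
  have hpair : ∀ w w' : ℝ, w ≠ w' → θ ((S w ⁻¹' A) ∆ (S w' ⁻¹' A)) = f 1 := by
    intro w w' hne
    have hc : S w' ⁻¹' (S (w - w') ⁻¹' A) = S w ⁻¹' A := by
      rw [← preimage_comp, hSadd, sub_add_cancel]
    have h5 : θ ((S w ⁻¹' A) ∆ (S w' ⁻¹' A)) = θ (S w' ⁻¹' ((S (w - w') ⁻¹' A) ∆ A)) := by
      rw [preimage_symmDiff, hc]
    rw [h5, (hS w').measure_preimage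
      (((hS _).measurable hA).symmDiff hA).nullMeasurableSet]
    exact hone _ (sub_ne_zero.mpr hne)
  have h0 : f 1 = 0 :=
    aux_pairwise_zero θ (fun w => S w ⁻¹' A) (fun w => (hS w).measurable hA) (f 1) hpair
  intro w
  rcases eq_or_ne w 0 with rfl | hw
  · rw [hS0, preimage_id, symmDiff_self]; simp
  · rw [show θ ((S w ⁻¹' A) ∆ A) = f w from rfl, hone w hw, h0]

/-- A flow `(T s)` is ergodic w.r.t. `μ` if every measurable set that is invariant
(mod `μ`) under every time of the flow is null or conull. -/
def FlowErgodic {X : Type*} [MeasurableSpace X] (μ : Measure X) (T : ℝ → X → X) : Prop :=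
  ∀ A : Set X, MeasurableSet A → (∀ s : ℝ, μ (symmDiff (T s ⁻¹' A) A) = 0) →
    μ A = 0 ∨ μ A = 1

theorem stmt4 {X : Type*} [MeasurableSpace X] [StandardBorelSpace X]
    (lam : ℝ) (hlam : lam ≠ 0)
    (g R : ℝ → X → X)
    (hgjm : Measurable (fun p : ℝ × X => g p.1 p.2))
    (hRjm : Measurable (fun p : ℝ × X => R p.1 p.2))
    (hg0 : g 0 = id) (hgadd : ∀ t t' : ℝ, g (t + t') = g t ∘ g t')
    (hR0 : R 0 = id) (hRadd : ∀ w w' : ℝ, R (w + w') = R w ∘ R w')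
    (hdil : ∀ t w : ℝ, g t ∘ R w = R (Real.exp (lam * t) * w) ∘ g t)
    (θ : Measure (X × X)) [IsProbabilityMeasure θ]
    (hθD : ∀ t : ℝ, MeasurePreserving (fun p : X × X => (g t p.1, g t p.2)) θ θ)
    (hθR1 : ∀ w : ℝ, MeasurePreserving (fun p : X × X => (R w p.1, p.2)) θ θ)
    (hθR2 : ∀ w : ℝ, MeasurePreserving (fun p : X × X => (p.1, R w p.2)) θ θ)
    (μ : Measure X) (hμ : μ = θ.map Prod.fst)
    (hμerg : FlowErgodic μ g)
    (θx : X → Measure X)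
    (hθxprob : ∀ x, IsProbabilityMeasure (θx x))
    (hθxmeas : ∀ B : Set X, MeasurableSet B → Measurable (fun x => θx x B))
    (hdisint : ∀ A B : Set X, MeasurableSet A → MeasurableSet B →
      θ (A ×ˢ B) = ∫⁻ x in A, θx x B ∂μ)
    (hfib : ∀ᵐ x ∂μ, (∀ w : ℝ, MeasurePreserving (R w) (θx x) (θx x)) ∧
      FlowErgodic (θx x) R) :
    FlowErgodic θ (fun t (p : X × X) => (g t p.1, g t p.2)) := by
  haveI hμprob : IsProbabilityMeasure μ := by
    rw [hμ]; exact Measure.isProbabilityMeasure_map measurable_fst.aemeasurable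
  have hgm : ∀ t, Measurable (g t) := fun t => hgjm.comp measurable_prodMk_left
  have hRm : ∀ w, Measurable (R w) := fun w => hRjm.comp measurable_prodMk_left
  intro A hA hAinv
  -- Step 1: A is invariant (mod θ) under the second-coordinate Rel flow
  have hS2 : ∀ w : ℝ, θ (((fun p : X × X => (p.1, R w p.2)) ⁻¹' A) ∆ A) = 0 := by
    refine aux_step1 lam hlam θ (fun t p => (g t p.1, g t p.2))
      (fun w p => (p.1, R w p.2)) hθD hθR2 ?_ ?_ ?_ A hA hAinv
    · funext p; simp [hR0]
    · intro w w'; funext p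
      simp only [Function.comp_apply]
      rw [hRadd w w']; rfl
    · intro t w; funext p
      simp only [Function.comp_apply]
      have := congrFun (hdil t w) p.2
      simp only [Function.comp_apply] at this
      rw [this]
  -- the disintegration as a kernel
  let κ : Kernel X X := ⟨θx, Measure.measurable_of_measurable_coe _ hθxmeas⟩
  haveI : IsMarkovKernel κ := ⟨fun x => hθxprob x⟩
  have hθeq : θ = μ.compProd κ := by
    refine ext_of_generate_finite _ generateFrom_prod.symm isPiSystem_prod ?_ ?_
    · rintro s ⟨s1, hs1, s2, hs2, rfl⟩
      rw [hdisint s1 s2 hs1 hs2, Measure.compProd_apply_prod hs1 hs2]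
      rfl
    · rw [Measure.compProd_apply_univ]
      simp [measure_univ]
  have hsec : ∀ C : Set (X × X), MeasurableSet C →
      θ C = ∫⁻ x, θx x (Prod.mk x ⁻¹' C) ∂μ := by
    intro C hC; rw [hθeq, Measure.compProd_apply hC]; rfl
  have hsecmeas : ∀ C : Set (X × X), MeasurableSet C →
      Measurable (fun x => θx x (Prod.mk x ⁻¹' C)) := fun C hC =>
    Kernel.measurable_kernel_prodMk_left (κ := κ) hC
  -- joint measurability setup for the Fubini argument
  let κ' : Kernel (X × ℝ) X := κ.comap Prod.fst measurable_fst
  haveI : IsMarkovKernel κ' := Kernel.IsMarkovKernel.comap κ measurable_fst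
  set C' : Set ((X × ℝ) × X) :=
    ((fun q : (X × ℝ) × X => (q.1.1, R q.1.2 q.2)) ⁻¹' A) ∆
      ((fun q : (X × ℝ) × X => (q.1.1, q.2)) ⁻¹' A) with hC'def
  have hC' : MeasurableSet C' := by
    have m1 : Measurable (fun q : (X × ℝ) × X => (q.1.1, R q.1.2 q.2)) :=
      measurable_fst.fst.prodMk (hRjm.comp (measurable_fst.snd.prodMk measurable_snd))
    have m2 : Measurable (fun q : (X × ℝ) × X => (q.1.1, q.2)) :=
      measurable_fst.fst.prodMk measurable_snd
    exact (m1 hA).symmDiff (m2 hA)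
  have hΦmeas : Measurable (fun q : X × ℝ => κ' q (Prod.mk q ⁻¹' C')) :=
    Kernel.measurable_kernel_prodMk_left hC'
  have hΦeq : ∀ (x : X) (w : ℝ), Prod.mk (x, w) ⁻¹' C' =
      (R w ⁻¹' (Prod.mk x ⁻¹' A)) ∆ (Prod.mk x ⁻¹' A) := by
    intro x w; rw [hC'def, preimage_symmDiff]; rfl
  -- the per-time sections: for each w, a.e. fibers don't move
  have hint : ∀ w : ℝ,
      ∫⁻ x, θx x ((R w ⁻¹' (Prod.mk x ⁻¹' A)) ∆ (Prod.mk x ⁻¹' A)) ∂μ = 0 := by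
    intro w
    have hTw : MeasurableSet (((fun p : X × X => (p.1, R w p.2)) ⁻¹' A) ∆ A) :=
      ((measurable_fst.prodMk ((hRm w).comp measurable_snd)) hA).symmDiff hA
    have hsect : ∀ x : X,
        Prod.mk x ⁻¹' ((((fun p : X × X => (p.1, R w p.2)) ⁻¹' A)) ∆ A) =
          (R w ⁻¹' (Prod.mk x ⁻¹' A)) ∆ (Prod.mk x ⁻¹' A) := fun x => by
      rw [preimage_symmDiff]; rfl
    calc ∫⁻ x, θx x ((R w ⁻¹' (Prod.mk x ⁻¹' A)) ∆ (Prod.mk x ⁻¹' A)) ∂μ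
        = ∫⁻ x, θx x (Prod.mk x ⁻¹'
            ((((fun p : X × X => (p.1, R w p.2)) ⁻¹' A)) ∆ A)) ∂μ :=
          lintegral_congr fun x => by rw [hsect x]
      _ = θ ((((fun p : X × X => (p.1, R w p.2)) ⁻¹' A)) ∆ A) := (hsec _ hTw).symm
      _ = 0 := hS2 w
  have htot : ∫⁻ q, κ' q (Prod.mk q ⁻¹' C') ∂(μ.prod volume) = 0 := by
    rw [lintegral_prod_symm _ hΦmeas.aemeasurable]
    have hinner : ∀ w : ℝ, ∫⁻ x, κ' (x, w) (Prod.mk (x, w) ⁻¹' C') ∂μ = 0 := by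
      intro w
      have heq : ∀ x : X, κ' (x, w) (Prod.mk (x, w) ⁻¹' C') =
          θx x ((R w ⁻¹' (Prod.mk x ⁻¹' A)) ∆ (Prod.mk x ⁻¹' A)) := by
        intro x
        rw [Kernel.comap_apply, hΦeq x w]
        rfl
      rw [lintegral_congr heq]
      exact hint w
    exact (lintegral_congr hinner).trans lintegral_zero
  have hae1 : ∀ᵐ x ∂μ, ∀ᵐ w : ℝ ∂volume,
      κ' (x, w) (Prod.mk (x, w) ⁻¹' C') = 0 := by
    have h := (lintegral_eq_zero_iff hΦmeas).mp htot
    exact Measure.ae_ae_of_ae_prod h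
  -- a.e. fiber of A is null or conull
  have hx01 : ∀ᵐ x ∂μ, θx x (Prod.mk x ⁻¹' A) = 0 ∨ θx x (Prod.mk x ⁻¹' A) = 1 := by
    filter_upwards [hae1, hfib] with x hx hfx
    set B : Set X := Prod.mk x ⁻¹' A with hBdef
    have hBmeas : MeasurableSet B := measurable_prodMk_left hA
    set W : Set ℝ := {w | θx x ((R w ⁻¹' B) ∆ B) = 0} with hWdef
    have hWc : (volume : Measure ℝ) Wᶜ = 0 := by
      have hWnull : ∀ᵐ w : ℝ ∂volume, θx x ((R w ⁻¹' B) ∆ B) = 0 := by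
        filter_upwards [hx] with w hw
        rwa [Kernel.comap_apply, hΦeq x w] at hw
      rw [ae_iff] at hWnull
      simpa [hWdef, compl_setOf] using hWnull
    have hadd : ∀ w w' : ℝ, w ∈ W → w' ∈ W → w + w' ∈ W := by
      intro w w' hw hw'
      have hww : θx x ((R w ⁻¹' B) ∆ B) = 0 := hw
      have hww' : θx x ((R w' ⁻¹' B) ∆ B) = 0 := hw'
      have h1 : R (w + w') ⁻¹' B = R w' ⁻¹' (R w ⁻¹' B) := by
        rw [hRadd, preimage_comp]
      have h2 : θx x ((R w' ⁻¹' (R w ⁻¹' B)) ∆ (R w' ⁻¹' B)) = 0 := by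
        rw [← preimage_symmDiff, (hfx.1 w').measure_preimage
          (((hRm w) hBmeas).symmDiff hBmeas).nullMeasurableSet]
        exact hww
      show θx x ((R (w + w') ⁻¹' B) ∆ B) = 0
      refine le_antisymm ?_ zero_le
      calc θx x ((R (w + w') ⁻¹' B) ∆ B)
          ≤ θx x ((R (w + w') ⁻¹' B) ∆ (R w' ⁻¹' B)) + θx x ((R w' ⁻¹' B) ∆ B) :=
            measure_symmDiff_le _ _ _
        _ = 0 := by rw [h1, h2, hww', add_zero]
    have hall : ∀ w : ℝ, w ∈ W := by
      intro w
      have hpres : MeasurePreserving (fun u : ℝ => w - u) volume volume :=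
        Measure.measurePreserving_sub_left volume w
      have hVc : (volume : Measure ℝ) ((fun u : ℝ => w - u) ⁻¹' Wᶜ) = 0 :=
        hpres.quasiMeasurePreserving.preimage_null hWc
      have hne : (W ∩ (fun u : ℝ => w - u) ⁻¹' W).Nonempty := by
        by_contra hcon
        rw [Set.not_nonempty_iff_eq_empty] at hcon
        have huniv : (univ : Set ℝ) ⊆ Wᶜ ∪ (fun u : ℝ => w - u) ⁻¹' Wᶜ := by
          intro u _
          by_contra hu
          rw [mem_union, not_or] at hu
          have h1 : u ∈ W := by simpa using hu.1
          have h2 : u ∈ (fun u : ℝ => w - u) ⁻¹' W := by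
            have := hu.2
            simp only [mem_preimage, mem_compl_iff, not_not] at this ⊢
            exact this
          have : u ∈ W ∩ (fun u : ℝ => w - u) ⁻¹' W := ⟨h1, h2⟩
          rw [hcon] at this
          exact this
        have : (volume : Measure ℝ) univ = 0 :=
          measure_mono_null huniv (measure_union_null hWc hVc)
        simpa using this
      obtain ⟨u, huW, huV⟩ := hne
      have hwu : w = (w - u) + u := by ring
      rw [hwu]
      exact hadd _ _ huV huW
    exact hfx.2 B hBmeas hall
  -- the base set E
  set E : Set X := {x | θx x (Prod.mk x ⁻¹' A) = 1} with hEdef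
  have hEmeas : MeasurableSet E := (hsecmeas A hA) (measurableSet_singleton 1)
  have hAE : θ (A ∆ (E ×ˢ (univ : Set X))) = 0 := by
    have hme : MeasurableSet (A ∆ (E ×ˢ (univ : Set X))) :=
      hA.symmDiff (hEmeas.prod MeasurableSet.univ)
    rw [hsec _ hme, lintegral_eq_zero_iff (hsecmeas _ hme)]
    filter_upwards [hx01] with x hx
    have hsect : Prod.mk x ⁻¹' (A ∆ (E ×ˢ (univ : Set X))) =
        (Prod.mk x ⁻¹' A) ∆ (Prod.mk x ⁻¹' (E ×ˢ (univ : Set X))) := preimage_symmDiff _ _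
    show θx x (Prod.mk x ⁻¹' (A ∆ (E ×ˢ (univ : Set X)))) = 0
    rcases hx with h0 | h1
    · have hxE : x ∉ E := by
        rw [hEdef]; simp only [mem_setOf_eq, h0]
        exact fun h => zero_ne_one h
      have hpre : Prod.mk x ⁻¹' (E ×ˢ (univ : Set X)) = (∅ : Set X) := by
        ext y; simp [hxE]
      rw [hsect, hpre, show (∅ : Set X) = (⊥ : Set X) from rfl, symmDiff_bot]
      exact h0
    · have hxE : x ∈ E := h1
      have hpre : Prod.mk x ⁻¹' (E ×ˢ (univ : Set X)) = (univ : Set X) := by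
        ext y; simp [hxE]
      rw [hsect, hpre, show (univ : Set X) = (⊤ : Set X) from rfl, symmDiff_top]
      haveI := hθxprob x
      rw [hnot_eq_compl, prob_compl_eq_one_sub (measurable_prodMk_left hA), h1, tsub_self]
  have hmarg : ∀ s : Set X, MeasurableSet s → θ (s ×ˢ (univ : Set X)) = μ s := by
    intro s hs
    rw [hμ, Measure.map_apply measurable_fst hs, prod_univ]
  have hEinv : ∀ t : ℝ, μ ((g t ⁻¹' E) ∆ E) = 0 := by
    intro t
    have hset : MeasurableSet ((g t ⁻¹' E) ∆ E) := ((hgm t) hEmeas).symmDiff hEmeas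
    rw [hμ, Measure.map_apply measurable_fst hset]
    have e1 : Prod.fst ⁻¹' (g t ⁻¹' E) =
        (fun p : X × X => (g t p.1, g t p.2)) ⁻¹' (E ×ˢ (univ : Set X)) := by
      ext p; simp
    have e2 : Prod.fst ⁻¹' E = E ×ˢ (univ : Set X) := prod_univ.symm
    have hfst : Prod.fst ⁻¹' ((g t ⁻¹' E) ∆ E) =
        ((fun p : X × X => (g t p.1, g t p.2)) ⁻¹' (E ×ˢ (univ : Set X))) ∆
          (E ×ˢ (univ : Set X)) := by
      rw [preimage_symmDiff, e1, e2]
    rw [hfst]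
    have hEuA : MeasurableSet ((E ×ˢ (univ : Set X)) ∆ A) :=
      (hEmeas.prod MeasurableSet.univ).symmDiff hA
    have h1 : θ (((fun p : X × X => (g t p.1, g t p.2)) ⁻¹' (E ×ˢ (univ : Set X))) ∆
        ((fun p : X × X => (g t p.1, g t p.2)) ⁻¹' A)) = 0 := by
      rw [← preimage_symmDiff, (hθD t).measure_preimage hEuA.nullMeasurableSet,
        symmDiff_comm]
      exact hAE
    have h2 : θ ((E ×ˢ (univ : Set X)) ∆ A) = 0 := by rw [symmDiff_comm]; exact hAE
    rw [aux_symmDiff_congr θ h1 h2]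
    exact hAinv t
  have hθA : θ A = μ E := by
    have := measure_congr (measure_symmDiff_eq_zero_iff.mp hAE)
    rw [this, hmarg E hEmeas]
  rcases hμerg E hEmeas hEinv with h | h
  · left; rw [hθA, h]
  · right; rw [hθA, h]
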